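/- Let N ≥ 1 and 0 ≤ k ≤ N be integers, let r ∈ (0, 1/2), and let H₁, …, H_N be independent Exp(1)-distributed random variables. For ρ > 1 define Q(ρ) = ∏_{i=1}^{k} P{ log₂(1+ρH_i) ≥ 2r·log₂ ρ } · ∏_{i=k+1}^{N} P{ log₂(1+ρH_i) < 2r·log₂ ρ }. Then lim_{ρ→∞} ln Q(ρ) / ln ρ = −(N−k)·(1−2r). -/

import Mathlib

open MeasureTheory ProbabilityTheory Filter Finset

/-- An Exp(1)-distributed random variable: P{X > t} = e^{−t} for all t ≥ 0. -/
def IsExp1 {Ω : Type*} [MeasurableSpace Ω] (μ : Measure Ω) (X : Ω → ℝ) : Prop :=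
  Measurable X ∧ ∀ t : ℝ, 0 ≤ t → μ {ω | t < X ω} = ENNReal.ofReal (Real.exp (-t))

private lemma card_filter_lt' {N k : ℕ} (hk : k ≤ N) :
    (Finset.univ.filter fun i : Fin N => (i : ℕ) < k).card = k := by
  rw [← Fintype.card_subtype]
  exact (Fintype.card_congr ⟨fun x => ⟨(x.1 : ℕ), x.2⟩,
    fun j => ⟨⟨j.1, lt_of_lt_of_le j.2 hk⟩, j.2⟩,
    fun x => by ext; rfl, fun j => by ext; rfl⟩).trans (Fintype.card_fin k)

private lemma exp1_ae_pos {Ω : Type*} [MeasurableSpace Ω] (μ : Measure Ω)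
    [IsProbabilityMeasure μ] {X : Ω → ℝ} (hX : IsExp1 μ X) : ∀ᵐ ω ∂μ, 0 < X ω := by
  have h0 := hX.2 0 le_rfl
  simp only [neg_zero, Real.exp_zero, ENNReal.ofReal_one] at h0
  rw [ae_iff]
  have hm : MeasurableSet {ω | 0 < X ω} := measurableSet_lt measurable_const hX.1
  have hs : {a | ¬ 0 < X a} = {ω | 0 < X ω}ᶜ := rfl
  rw [hs, prob_compl_eq_one_sub hm, h0, tsub_self]

private lemma exp1_ge {Ω : Type*} [MeasurableSpace Ω] (μ : Measure Ω)
    [IsProbabilityMeasure μ] {X : Ω → ℝ} (hX : IsExp1 μ X) {t : ℝ} (ht : 0 ≤ t) :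
    μ {ω | t ≤ X ω} = ENNReal.ofReal (Real.exp (-t)) := by
  refine le_antisymm ?_ ?_
  · rcases eq_or_lt_of_le ht with rfl | htpos
    · simp only [neg_zero, Real.exp_zero, ENNReal.ofReal_one]
      exact (measure_mono (Set.subset_univ _)).trans (by simp)
    · have key : ∀ n : ℕ, μ {ω | t ≤ X ω} ≤ ENNReal.ofReal (Real.exp (-(t - t / (n + 1)))) := by
        intro n
        rw [← hX.2 (t - t / (n + 1)) (by
          have h1 : t / (n + 1) ≤ t / 1 := by
            apply div_le_div_of_nonneg_left htpos.le one_pos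
            exact_mod_cast Nat.le_add_left 1 n
          simp at h1; linarith)]
        refine measure_mono fun ω hω => ?_
        simp only [Set.mem_setOf_eq] at hω ⊢
        refine lt_of_lt_of_le ?_ hω
        have : 0 < t / (n + 1) := by positivity
        linarith
      have hlim : Tendsto (fun n : ℕ => ENNReal.ofReal (Real.exp (-(t - t / (n + 1)))))
          atTop (nhds (ENNReal.ofReal (Real.exp (-t)))) := by
        have h1 : Tendsto (fun n : ℕ => t / (n + 1)) atTop (nhds 0) := by
          simpa [div_eq_mul_inv] using tendsto_one_div_add_atTop_nhds_zero_nat.const_mul t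
        have h2 : Tendsto (fun n : ℕ => -(t - t / (n + 1))) atTop (nhds (-t)) := by
          simpa using (tendsto_const_nhds.sub h1).neg
        exact (ENNReal.continuous_ofReal.tendsto _).comp
          ((Real.continuous_exp.tendsto _).comp h2)
      exact ge_of_tendsto' hlim key
  · rw [← hX.2 t ht]
    refine measure_mono fun ω h => ?_
    simp only [Set.mem_setOf_eq] at h ⊢
    exact le_of_lt h

private lemma exp1_lt {Ω : Type*} [MeasurableSpace Ω] (μ : Measure Ω)
    [IsProbabilityMeasure μ] {X : Ω → ℝ} (hX : IsExp1 μ X) {t : ℝ} (ht : 0 ≤ t) :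
    μ {ω | X ω < t} = 1 - ENNReal.ofReal (Real.exp (-t)) := by
  have hm : MeasurableSet {ω | t ≤ X ω} := measurableSet_le measurable_const hX.1
  have hs : {ω | X ω < t} = {ω | t ≤ X ω}ᶜ := by ext ω; simp [not_le]
  rw [hs, prob_compl_eq_one_sub hm, exp1_ge μ hX ht]

/-- for multiplexing gain r ∈ (0,1/2), the probability
Q(ρ) = ∏_{i≤k} P{log₂(1+ρHᵢ) ≥ 2r log₂ ρ} · ∏_{i>k} P{log₂(1+ρHᵢ) < 2r log₂ ρ}
that exactly the first k source–relay links are not in outage satisfies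
lim_{ρ→∞} ln Q(ρ)/ln ρ = −(N−k)(1−2r). -/

theorem source_relay_outage_pattern_exponent {Ω : Type*} [MeasurableSpace Ω]
    (μ : Measure Ω) [IsProbabilityMeasure μ]
    (N k : ℕ) (hN : 1 ≤ N) (hk : k ≤ N) (r : ℝ) (hr0 : 0 < r) (hr1 : r < 1 / 2)
    (H : Fin N → Ω → ℝ) (hH : ∀ i, IsExp1 μ (H i))
    (hindep : iIndepFun H μ) :
    Tendsto (fun ρ : ℝ =>
        Real.log
          ((∏ i ∈ Finset.univ.filter (fun i : Fin N => (i : ℕ) < k),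
              (μ {ω | 2 * r * Real.logb 2 ρ ≤ Real.logb 2 (1 + ρ * H i ω)}).toReal) *
            ∏ i ∈ Finset.univ.filter (fun i : Fin N => k ≤ (i : ℕ)),
              (μ {ω | Real.logb 2 (1 + ρ * H i ω) < 2 * r * Real.logb 2 ρ}).toReal)
          / Real.log ρ)
      atTop (nhds (-((N : ℝ) - (k : ℝ)) * (1 - 2 * r))) := by
  set T : ℝ → ℝ := fun ρ => (ρ ^ (2 * r) - 1) / ρ with hTdef
  -- basic facts for ρ > 1
  have hfacts : ∀ ρ : ℝ, 1 < ρ → 0 < ρ ∧ 0 < Real.log ρ ∧ 1 < ρ ^ (2 * r) ∧ 0 < T ρ := by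
    intro ρ hρ
    have hρ0 : (0 : ℝ) < ρ := lt_trans one_pos hρ
    have hrp : 1 < ρ ^ (2 * r) :=
      (Real.one_lt_rpow_iff_of_pos hρ0).mpr (Or.inl ⟨hρ, by linarith⟩)
    exact ⟨hρ0, Real.log_pos hρ, hrp, div_pos (by linarith) hρ0⟩
  -- pointwise event characterization
  have hiff : ∀ ρ : ℝ, 1 < ρ → ∀ x : ℝ, 0 < x →
      (2 * r * Real.logb 2 ρ ≤ Real.logb 2 (1 + ρ * x) ↔ T ρ ≤ x) := by
    intro ρ hρ x hx
    obtain ⟨hρ0, -, -, -⟩ := hfacts ρ hρ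
    have hx1 : (0 : ℝ) < 1 + ρ * x := by nlinarith
    have h2 : 2 * r * Real.logb 2 ρ = Real.logb 2 (ρ ^ (2 * r)) := by
      rw [Real.logb_rpow_eq_mul_logb_of_pos hρ0]
    rw [h2, Real.logb_le_logb one_lt_two (Real.rpow_pos_of_pos hρ0 _) hx1]
    rw [hTdef]
    simp only
    rw [div_le_iff₀ hρ0]
    constructor <;> intro h <;> nlinarith
  -- probabilities
  have hprob1 : ∀ ρ : ℝ, 1 < ρ → ∀ i : Fin N,
      (μ {ω | 2 * r * Real.logb 2 ρ ≤ Real.logb 2 (1 + ρ * H i ω)}).toReal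
        = Real.exp (-T ρ) := by
    intro ρ hρ i
    obtain ⟨hρ0, -, -, hT0⟩ := hfacts ρ hρ
    have hae : {ω | 2 * r * Real.logb 2 ρ ≤ Real.logb 2 (1 + ρ * H i ω)}
        =ᵐ[μ] {ω | T ρ ≤ H i ω} := by
      filter_upwards [exp1_ae_pos μ (hH i)] with ω hω
      simp only [Set.mem_setOf_eq, eq_iff_iff]
      exact hiff ρ hρ _ hω
    rw [measure_congr hae, exp1_ge μ (hH i) hT0.le, ENNReal.toReal_ofReal (Real.exp_pos _).le]
  have hprob2 : ∀ ρ : ℝ, 1 < ρ → ∀ i : Fin N,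
      (μ {ω | Real.logb 2 (1 + ρ * H i ω) < 2 * r * Real.logb 2 ρ}).toReal
        = 1 - Real.exp (-T ρ) := by
    intro ρ hρ i
    obtain ⟨hρ0, -, -, hT0⟩ := hfacts ρ hρ
    have hae : {ω | Real.logb 2 (1 + ρ * H i ω) < 2 * r * Real.logb 2 ρ}
        =ᵐ[μ] {ω | H i ω < T ρ} := by
      filter_upwards [exp1_ae_pos μ (hH i)] with ω hω
      simp only [Set.mem_setOf_eq, eq_iff_iff, ← not_le]
      exact not_congr (hiff ρ hρ _ hω)
    rw [measure_congr hae, exp1_lt μ (hH i) hT0.le]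
    have hle : ENNReal.ofReal (Real.exp (-T ρ)) ≤ 1 :=
      ENNReal.ofReal_le_one.mpr (Real.exp_le_one_iff.mpr (by linarith))
    rw [ENNReal.toReal_sub_of_le hle ENNReal.one_ne_top, ENNReal.toReal_one,
      ENNReal.toReal_ofReal (Real.exp_pos _).le]
  -- cardinalities
  have hcard1 : (Finset.univ.filter fun i : Fin N => (i : ℕ) < k).card = k :=
    card_filter_lt' hk
  have hcard2 : (Finset.univ.filter fun i : Fin N => k ≤ (i : ℕ)).card = N - k := by
    have h := Finset.card_filter_add_card_filter_not
      (s := (Finset.univ : Finset (Fin N))) (p := fun i : Fin N => (i : ℕ) < k)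
    simp only [not_lt, Finset.card_univ, Fintype.card_fin] at h
    omega
  -- the explicit comparison function
  set g : ℝ → ℝ := fun ρ =>
    (-(k : ℝ) * T ρ) * (Real.log ρ)⁻¹
      + ((N : ℝ) - k) * (Real.log ((1 - Real.exp (-T ρ)) / T ρ) * (Real.log ρ)⁻¹
          + Real.log (1 - ρ ^ (-(2 * r))) * (Real.log ρ)⁻¹ + (2 * r - 1)) with hgdef
  have heq : g =ᶠ[atTop] (fun ρ : ℝ =>
      Real.log
        ((∏ i ∈ Finset.univ.filter (fun i : Fin N => (i : ℕ) < k),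
            (μ {ω | 2 * r * Real.logb 2 ρ ≤ Real.logb 2 (1 + ρ * H i ω)}).toReal) *
          ∏ i ∈ Finset.univ.filter (fun i : Fin N => k ≤ (i : ℕ)),
            (μ {ω | Real.logb 2 (1 + ρ * H i ω) < 2 * r * Real.logb 2 ρ}).toReal)
        / Real.log ρ) := by
    filter_upwards [eventually_gt_atTop 1] with ρ hρ
    obtain ⟨hρ0, hlogρ, hrp, hT0⟩ := hfacts ρ hρ
    have hE : Real.exp (-T ρ) < 1 := Real.exp_lt_one_iff.mpr (by linarith)
    have h1E : 0 < 1 - Real.exp (-T ρ) := by linarith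
    have hinv : ρ ^ (-(2 * r)) < 1 := Real.rpow_lt_one_of_one_lt_of_neg hρ (by linarith)
    have hp1 : (∏ i ∈ Finset.univ.filter (fun i : Fin N => (i : ℕ) < k),
        (μ {ω | 2 * r * Real.logb 2 ρ ≤ Real.logb 2 (1 + ρ * H i ω)}).toReal)
        = Real.exp (-T ρ) ^ k := by
      rw [Finset.prod_congr rfl (fun i _ => hprob1 ρ hρ i), Finset.prod_const, hcard1]
    have hp2 : (∏ i ∈ Finset.univ.filter (fun i : Fin N => k ≤ (i : ℕ)),
        (μ {ω | Real.logb 2 (1 + ρ * H i ω) < 2 * r * Real.logb 2 ρ}).toReal)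
        = (1 - Real.exp (-T ρ)) ^ (N - k) := by
      rw [Finset.prod_congr rfl (fun i _ => hprob2 ρ hρ i), Finset.prod_const, hcard2]
    rw [hp1, hp2, Real.log_mul (pow_ne_zero _ (Real.exp_ne_zero _)) (pow_ne_zero _ h1E.ne'),
      Real.log_pow, Real.log_pow, Real.log_exp, Nat.cast_sub hk]
    have hA : Real.log ((1 - Real.exp (-T ρ)) / T ρ)
        = Real.log (1 - Real.exp (-T ρ)) - Real.log (T ρ) := Real.log_div h1E.ne' hT0.ne'
    have hB : Real.log (T ρ) = Real.log (ρ ^ (2 * r) - 1) - Real.log ρ := by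
      rw [hTdef]; exact Real.log_div (by linarith) hρ0.ne'
    have hC : Real.log (1 - ρ ^ (-(2 * r)))
        = Real.log (ρ ^ (2 * r) - 1) - 2 * r * Real.log ρ := by
      have he : 1 - ρ ^ (-(2 * r)) = (ρ ^ (2 * r) - 1) / ρ ^ (2 * r) := by
        rw [Real.rpow_neg hρ0.le]
        field_simp
      rw [he, Real.log_div (by linarith) (Real.rpow_pos_of_pos hρ0 _).ne',
        Real.log_rpow hρ0]
    rw [hgdef]
    simp only
    rw [hA, hB, hC]
    field_simp
    ring
  -- limits
  have hT0' : Tendsto T atTop (nhds 0) := by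
    have h1 : Tendsto (fun ρ : ℝ => ρ ^ (2 * r - 1)) atTop (nhds 0) := by
      have := tendsto_rpow_neg_atTop (y := 1 - 2 * r) (by linarith)
      simpa [show -(1 - 2 * r) = 2 * r - 1 by ring] using this
    have h2 : Tendsto (fun ρ : ℝ => ρ⁻¹) atTop (nhds 0) := tendsto_inv_atTop_zero
    have h3 : Tendsto (fun ρ : ℝ => ρ ^ (2 * r - 1) - ρ⁻¹) atTop (nhds 0) := by
      simpa using h1.sub h2
    refine h3.congr' ?_
    filter_upwards [eventually_gt_atTop 0] with ρ hρ0
    rw [hTdef]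
    simp only
    rw [sub_div, Real.rpow_sub hρ0, Real.rpow_one, one_div]
  have hloginv : Tendsto (fun ρ : ℝ => (Real.log ρ)⁻¹) atTop (nhds 0) :=
    Real.tendsto_log_atTop.inv_tendsto_atTop
  have hTne : Tendsto T atTop (nhdsWithin 0 {x : ℝ | x ≠ 0}) := by
    rw [tendsto_nhdsWithin_iff]
    refine ⟨hT0', ?_⟩
    filter_upwards [eventually_gt_atTop 1] with ρ hρ
    exact (hfacts ρ hρ).2.2.2.ne'
  have hslope : Tendsto (fun ρ : ℝ => (1 - Real.exp (-T ρ)) / T ρ) atTop (nhds 1) := by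
    have hd : HasDerivAt (fun s : ℝ => 1 - Real.exp (-s)) 1 0 := by
      have h := ((Real.hasDerivAt_exp (-0 : ℝ)).comp 0 ((hasDerivAt_id (0:ℝ)).neg)).const_sub 1
      simpa using h
    have hs := hasDerivAt_iff_tendsto_slope.mp hd
    refine (hs.comp hTne).congr' ?_
    refine Filter.Eventually.of_forall fun ρ => ?_
    simp [Function.comp, slope_def_field, Real.exp_zero]
  have hP1 : Tendsto (fun ρ : ℝ => Real.log ((1 - Real.exp (-T ρ)) / T ρ)) atTop (nhds 0) := by
    have := (Real.continuousAt_log one_ne_zero).tendsto.comp hslope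
    simpa [Function.comp_def] using this
  have hP2 : Tendsto (fun ρ : ℝ => Real.log (1 - ρ ^ (-(2 * r)))) atTop (nhds 0) := by
    have h := tendsto_rpow_neg_atTop (y := 2 * r) (by linarith)
    have h2 : Tendsto (fun ρ : ℝ => 1 - ρ ^ (-(2 * r))) atTop (nhds 1) := by
      simpa using tendsto_const_nhds.sub h
    have := (Real.continuousAt_log one_ne_zero).tendsto.comp h2
    simpa [Function.comp_def] using this
  have hgA : Tendsto (fun ρ : ℝ => (-(k : ℝ) * T ρ) * (Real.log ρ)⁻¹) atTop (nhds 0) := by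
    simpa using (hT0'.const_mul (-(k : ℝ))).mul hloginv
  have hgB : Tendsto (fun ρ : ℝ => Real.log ((1 - Real.exp (-T ρ)) / T ρ) * (Real.log ρ)⁻¹
      + Real.log (1 - ρ ^ (-(2 * r))) * (Real.log ρ)⁻¹ + (2 * r - 1)) atTop
      (nhds (2 * r - 1)) := by
    simpa using ((hP1.mul hloginv).add (hP2.mul hloginv)).add
      (tendsto_const_nhds (x := 2 * r - 1) (f := atTop))
  have hg : Tendsto g atTop (nhds (-((N : ℝ) - k) * (1 - 2 * r))) := by
    have := hgA.add (hgB.const_mul ((N : ℝ) - k))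
    have hval : -((N : ℝ) - k) * (1 - 2 * r) = 0 + ((N : ℝ) - k) * (2 * r - 1) := by ring
    rw [hval]
    exact this
  exact hg.congr' heq
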